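/- If H ∈ ℝ^{2d×2d} is a symmetric positive definite symplectic matrix, then there exists a symmetric matrix S and a symmetric positive definite matrix P (both d×d) such that H = [[I,0],[S,I]] · [[P,0],[0,P^{-1}]] · [[I,S],[0,I]]. -/

import Mathlib

open Matrix

def Jmat (d : ℕ) : Matrix (Fin d ⊕ Fin d) (Fin d ⊕ Fin d) ℝ :=
  Matrix.fromBlocks 0 1 (-1) 0

def IsSymplectic {d : ℕ} (H : Matrix (Fin d ⊕ Fin d) (Fin d ⊕ Fin d) ℝ) : Prop :=
  Hᵀ * Jmat d * H = Jmat d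

theorem stmt18 (d : ℕ) (H : Matrix (Fin d ⊕ Fin d) (Fin d ⊕ Fin d) ℝ)
    (hpd : H.PosDef) (h : IsSymplectic H) :
    ∃ S P : Matrix (Fin d) (Fin d) ℝ,
      Sᵀ = S ∧ P.PosDef ∧
      H = Matrix.fromBlocks 1 0 S 1 * Matrix.fromBlocks P 0 0 P⁻¹ *
          Matrix.fromBlocks 1 S 0 1 := by
  set A := H.toBlocks₁₁ with hA
  set B := H.toBlocks₁₂ with hB
  set B' := H.toBlocks₂₁ with hB'
  set C := H.toBlocks₂₂ with hC
  have hHsymm : Hᵀ = H := hpd.isHermitian.eq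
  have hHfb : H = fromBlocks A B B' C := (fromBlocks_toBlocks H).symm
  have hBB : B' = Bᵀ := by
    have := congrArg toBlocks₂₁ hHsymm
    have h2 : (Hᵀ).toBlocks₂₁ = Bᵀ := by ext i j; rfl
    rw [h2] at this; exact this.symm
  have hAsymm : Aᵀ = A := by
    have := congrArg toBlocks₁₁ hHsymm
    have h2 : (Hᵀ).toBlocks₁₁ = Aᵀ := by ext i j; rfl
    rw [h2] at this; exact this
  have hApd : A.PosDef := by
    refine PosDef.of_dotProduct_mulVec_pos ?_ ?_
    · simpa [IsHermitian] using hAsymm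
    · intro x hx
      have hy : (Sum.elim x 0 : Fin d ⊕ Fin d → ℝ) ≠ 0 := by
        intro hcon
        apply hx
        funext i
        have := congrFun hcon (Sum.inl i)
        simpa using this
      have := hpd.dotProduct_mulVec_pos (x := Sum.elim x 0) hy
      have heq : (star (Sum.elim x 0) : Fin d ⊕ Fin d → ℝ) ⬝ᵥ H *ᵥ (Sum.elim x 0)
          = star x ⬝ᵥ A *ᵥ x := by
        rw [hHfb]
        simp [dotProduct, mulVec, Fintype.sum_sum_type, fromBlocks]
      rwa [heq] at this
  haveI : Invertible A := hApd.isUnit.invertible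
  have h' : fromBlocks ((A * 0 + B * -1) * A + (A * 1 + B * 0) * Bᵀ)
      ((A * 0 + B * -1) * B + (A * 1 + B * 0) * C)
      ((Bᵀ * 0 + C * -1) * A + (Bᵀ * 1 + C * 0) * Bᵀ)
      ((Bᵀ * 0 + C * -1) * B + (Bᵀ * 1 + C * 0) * C) = fromBlocks 0 1 (-1) 0 := by
    have h' := h
    unfold IsSymplectic at h'
    rw [hHsymm, hHfb, hBB] at h'
    rw [Jmat] at h'
    rw [fromBlocks_multiply, fromBlocks_multiply] at h'
    exact h'
  have e11 : A * Bᵀ = B * A := by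
    have := congrArg toBlocks₁₁ h'
    simp only [toBlocks_fromBlocks₁₁, Matrix.mul_zero, Matrix.mul_one, Matrix.mul_neg,
      Matrix.mul_one, zero_add, add_zero, Matrix.neg_mul] at this
    have := neg_add_eq_zero.mp this
    exact this.symm
  have e21 : C * A = Bᵀ * Bᵀ + 1 := by
    have := congrArg toBlocks₂₁ h'
    simp only [toBlocks_fromBlocks₂₁, Matrix.mul_zero, Matrix.mul_one, Matrix.mul_neg,
      zero_add, add_zero, Matrix.neg_mul] at this
    -- this : -(C * A) + Bᵀ * Bᵀ = -1
    have h2 : Bᵀ * Bᵀ = -1 + C * A := by rw [← this]; abel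
    rw [h2]; abel
  have hAinv : A⁻¹ᵀ = A⁻¹ := by
    rw [transpose_nonsing_inv, hAsymm]
  have key : A⁻¹ * B = Bᵀ * A⁻¹ := by
    calc A⁻¹ * B = A⁻¹ * (B * A) * A⁻¹ := by
          rw [Matrix.mul_assoc A⁻¹ (B * A) A⁻¹, Matrix.mul_assoc B A A⁻¹,
            Matrix.mul_inv_of_invertible, Matrix.mul_one]
      _ = A⁻¹ * (A * Bᵀ) * A⁻¹ := by rw [e11]
      _ = Bᵀ * A⁻¹ := by
          rw [← Matrix.mul_assoc, Matrix.inv_mul_of_invertible, Matrix.one_mul]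
  refine ⟨Bᵀ * A⁻¹, A, ?_, hApd, ?_⟩
  · rw [transpose_mul, hAinv, transpose_transpose, key]
  · have hBeq : A * (Bᵀ * A⁻¹) = B := by
      rw [← Matrix.mul_assoc, e11, Matrix.mul_assoc, Matrix.mul_inv_of_invertible,
        Matrix.mul_one]
    have hB'eq : Bᵀ * A⁻¹ * A = B' := by
      rw [hBB, Matrix.mul_assoc, Matrix.inv_mul_of_invertible, Matrix.mul_one]
    have hCeq : Bᵀ * A⁻¹ * A * (Bᵀ * A⁻¹) + A⁻¹ = C := by
      have hC' : C = (Bᵀ * Bᵀ + 1) * A⁻¹ := by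
        rw [← e21, Matrix.mul_assoc, Matrix.mul_inv_of_invertible, Matrix.mul_one]
      rw [hC', Matrix.add_mul, Matrix.one_mul]
      congr 1
      rw [Matrix.mul_assoc Bᵀ A⁻¹ A, Matrix.inv_mul_of_invertible, Matrix.mul_one,
        ← Matrix.mul_assoc, Matrix.mul_assoc]
    rw [fromBlocks_multiply, fromBlocks_multiply]
    simp only [Matrix.mul_zero, Matrix.zero_mul, Matrix.mul_one, Matrix.one_mul,
      add_zero, zero_add]
    rw [hBeq, hCeq, hB'eq, hHfb]
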